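/- Let Σ be a counting signature, let 𝔄 be a structure interpreting Σ, and let Z be a positive integer. Let Σ' be the signature formed by adding ⌈log₂ Z⌉ new unary predicates to Σ, regarded as a counting signature with the same counting predicates as Σ. Then 𝔄 can be expanded to a Z-differentiated structure 𝔄' interpreting Σ'. Moreover, if 𝔄 is chromatic over Σ, the expansion 𝔄' can be chosen chromatic over Σ'. -/

import Mathlib

/-- A counting signature: finite sets of unary and binary predicate symbols,
with a distinguished finite set of binary predicates (the counting predicates). -/
structure CSig where
  U : Type
  B : Type
  [instU : Fintype U]
  [instDU : DecidableEq U]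
  [instB : Fintype B]
  [instDB : DecidableEq B]
  counting : Finset B

attribute [instance] CSig.instU CSig.instDU CSig.instB CSig.instDB

/-- A structure interpreting a counting signature over domain `A`. -/
structure Struc (σ : CSig) (A : Type) where
  unary : σ.U → A → Bool
  binary : σ.B → A → A → Bool

/-- A 1-type over `σ`: a truth assignment to all literals in the single variable x. -/
structure OneType (σ : CSig) where
  u : σ.U → Bool
  d : σ.B → Bool
deriving DecidableEq, Fintype

/-- A 2-type over `σ`: a truth assignment to all equality-free literals in x, y. -/
structure TwoType (σ : CSig) where
  ux : σ.U → Bool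
  uy : σ.U → Bool
  dx : σ.B → Bool
  dy : σ.B → Bool
  rxy : σ.B → Bool
  ryx : σ.B → Bool
deriving DecidableEq

variable {σ : CSig} {A : Type}

/-- Explicit equivalence of `TwoType σ` with a product, giving finiteness. -/
def TwoType.equivProd (σ : CSig) :
    TwoType σ ≃ ((σ.U → Bool) × (σ.U → Bool) × (σ.B → Bool) × (σ.B → Bool) ×
      (σ.B → Bool) × (σ.B → Bool)) where
  toFun τ := ⟨τ.ux, τ.uy, τ.dx, τ.dy, τ.rxy, τ.ryx⟩
  invFun p := ⟨p.1, p.2.1, p.2.2.1, p.2.2.2.1, p.2.2.2.2.1, p.2.2.2.2.2⟩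
  left_inv τ := rfl
  right_inv p := rfl

instance : Fintype (TwoType σ) := Fintype.ofEquiv _ (TwoType.equivProd σ).symm

/-- The result of transposing x and y in a 2-type. -/
def TwoType.inv (τ : TwoType σ) : TwoType σ := ⟨τ.uy, τ.ux, τ.dy, τ.dx, τ.ryx, τ.rxy⟩

/-- The 1-type (of x) included in a 2-type. -/
def TwoType.tp1 (τ : TwoType σ) : OneType σ := ⟨τ.ux, τ.dx⟩

/-- tp₂(τ) = tp₁(τ⁻¹). -/
def TwoType.tp2 (τ : TwoType σ) : OneType σ := ⟨τ.uy, τ.dy⟩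

/-- The 1-type of an element. -/
def Struc.tp1 (S : Struc σ A) (a : A) : OneType σ :=
  ⟨fun p => S.unary p a, fun f => S.binary f a a⟩

/-- The 2-type of a pair of (distinct) elements. -/
def Struc.tp2 (S : Struc σ A) (a b : A) : TwoType σ :=
  ⟨fun p => S.unary p a, fun p => S.unary p b,
   fun f => S.binary f a a, fun f => S.binary f b b,
   fun f => S.binary f a b, fun f => S.binary f b a⟩

/-- A 2-type is a message-type if it contains f(x,y) for some counting predicate f. -/
def IsMessage (σ : CSig) (τ : TwoType σ) : Prop := ∃ f ∈ σ.counting, τ.rxy f = true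

instance : DecidablePred (IsMessage σ) := fun τ => by unfold IsMessage; infer_instance

/-- A message-type whose inverse is also a message-type. -/
def IsInvertible (σ : CSig) (τ : TwoType σ) : Prop := IsMessage σ τ ∧ IsMessage σ τ.inv

instance : DecidablePred (IsInvertible σ) := fun τ => by unfold IsInvertible; infer_instance

/-- A 2-type is silent if neither it nor its inverse is a message-type. -/
def IsSilent (σ : CSig) (τ : TwoType σ) : Prop := ¬ IsMessage σ τ ∧ ¬ IsMessage σ τ.inv

/-- The (sub)type of message-types over σ. -/
def MsgType (σ : CSig) := {τ : TwoType σ // IsMessage σ τ}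

instance : Fintype (MsgType σ) := Subtype.fintype _
instance : DecidableEq (MsgType σ) := fun a b => by
  exact (inferInstance : DecidableEq {τ : TwoType σ // IsMessage σ τ}) a b

/-- Y-branching: every element sends at most Y messages along each counting predicate. -/
def Struc.Branching (S : Struc σ A) (Y : ℕ) : Prop :=
  ∀ a : A, ∀ f ∈ σ.counting, {b : A | b ≠ a ∧ S.binary f a b = true}.encard ≤ (Y : ℕ∞)

def Struc.FinitelyBranching (S : Struc σ A) : Prop := ∃ Y : ℕ, S.Branching Y

/-- Chromatic: distinct elements connected by a chain of 1 or 2 invertible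
message-types have distinct 1-types. -/
def Struc.Chromatic (S : Struc σ A) : Prop :=
  (∀ a a' : A, a ≠ a' → IsInvertible σ (S.tp2 a a') → S.tp1 a ≠ S.tp1 a') ∧
  (∀ a a' a'' : A, a ≠ a' → a' ≠ a'' → a ≠ a'' →
     IsInvertible σ (S.tp2 a a') → IsInvertible σ (S.tp2 a' a'') → S.tp1 a ≠ S.tp1 a'')

/-- Z-differentiated: each 1-type is realized either at most once or more than Z times. -/
def Struc.Differentiated (S : Struc σ A) (Z : ℕ) : Prop :=
  ∀ π : OneType σ, {a : A | S.tp1 a = π}.encard ≤ 1 ∨ (Z : ℕ∞) < {a : A | S.tp1 a = π}.encard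

/-- π and π' form a noisy pair: no silent 2-type connects an element of 1-type π
to an element of 1-type π'. -/
def NoisyPair (S : Struc σ A) (π π' : OneType σ) : Prop :=
  ¬ ∃ a a' : A, a ≠ a' ∧ S.tp1 a = π ∧ S.tp1 a' = π' ∧ IsSilent σ (S.tp2 a a')

/-- The Π-profile of a: for each message-type μ, the number of elements b with 1-type
in Π such that tp[a,b] = μ. -/
noncomputable def Struc.pr (S : Struc σ A) (P : Set (OneType σ)) (a : A) : MsgType σ → ℕ∞ :=
  fun μ => {b : A | b ≠ a ∧ S.tp1 b ∈ P ∧ S.tp2 a b = μ.1}.encard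

/-- The Π-count of a: for each counting predicate f, the number of elements b ≠ a with
1-type in Π such that f[a,b] holds. -/
noncomputable def Struc.ct (S : Struc σ A) (P : Set (OneType σ)) (a : A) :
    {f : σ.B // f ∈ σ.counting} → ℕ∞ :=
  fun f => {b : A | b ≠ a ∧ S.tp1 b ∈ P ∧ S.binary f.1 a b = true}.encard

/-- A Π-group: all elements share the same 1-type and the same Π-count. -/
def PiGroup (S : Struc σ A) (P : Set (OneType σ)) (B : Set A) : Prop :=
  ∀ a ∈ B, ∀ b ∈ B, S.tp1 a = S.tp1 b ∧ S.ct P a = S.ct P b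

/-- A π-patch: a {π}-group all of whose elements have {π}-profiles agreeing on the
invertible message-types (the first M* coordinates). -/
def PiPatch (S : Struc σ A) (π : OneType σ) (B : Set A) : Prop :=
  PiGroup S {π} B ∧
  ∀ a ∈ B, ∀ b ∈ B, ∀ μ : MsgType σ, IsInvertible σ μ.1 → S.pr {π} a μ = S.pr {π} b μ

/-- τ is realized in S. -/
def Realizes2 (S : Struc σ A) (τ : TwoType σ) : Prop := ∃ a b : A, a ≠ b ∧ S.tp2 a b = τ

/-- (Π,B)-approximation. -/
def PiBApprox (S S' : Struc σ A) (P : Set (OneType σ)) (B : Set A) : Prop :=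
  S'.Chromatic ∧
  (∀ τ : TwoType σ, Realizes2 S' τ → Realizes2 S τ) ∧
  ∀ a : A,
    S'.tp1 a = S.tp1 a ∧
    S'.pr Pᶜ a = S.pr Pᶜ a ∧
    (a ∉ B → S'.pr Set.univ a = S.pr Set.univ a) ∧
    (a ∈ B → S'.ct P a = S.ct P a)
/-- A star-type: a 1-type together with a vector of multiplicities indexed by the
message-types. -/
structure StarType (σ : CSig) where
  tp : OneType σ
  v : MsgType σ → ℕ
deriving DecidableEq

/-- The defining condition on star-types: v(μ) > 0 implies tp₁(μ) = π. -/
def StarType.IsValid (s : StarType σ) : Prop :=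
  ∀ μ : MsgType σ, 0 < s.v μ → μ.1.tp1 = s.tp

/-- The star-type of an element: its 1-type together with its profile. -/
noncomputable def StarOf (S : Struc σ A) (a : A) : StarType σ where
  tp := S.tp1 a
  v := fun μ => ({b : A | b ≠ a ∧ S.tp2 a b = μ.1}.encard).toNat

/-- X-sparse: at most X distinct star-types are realized. -/
noncomputable def Struc.Sparse (S : Struc σ A) (X : ℕ) : Prop :=
  {st : StarType σ | ∃ a : A, StarOf S a = st}.encard ≤ (X : ℕ∞)

/-- A chromatic star-type: for every 1-type π', the multiplicities of invertible
message-types μ with tp₂(μ) = π' sum to at most 1, and to 0 when π' = tp. -/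
def StarType.Chromatic (s : StarType σ) : Prop :=
  ∀ π' : OneType σ,
    (∑ μ ∈ Finset.univ.filter (fun μ : MsgType σ => IsInvertible σ μ.1 ∧ μ.1.tp2 = π'),
        s.v μ) ≤ 1 ∧
    (π' = s.tp →
      (∑ μ ∈ Finset.univ.filter (fun μ : MsgType σ => IsInvertible σ μ.1 ∧ μ.1.tp2 = π'),
        s.v μ) = 0)

/-- A frame over σ: a finite set of (pairwise distinct) star-types, a set I of
unordered pairs of 1-types, and a choice θ of a silent 2-type for each pair in I. -/
structure Frame (σ : CSig) where
  stars : Finset (StarType σ)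
  valid : ∀ s ∈ stars, s.IsValid
  I : Set (Sym2 (OneType σ))
  θ : Sym2 (OneType σ) → TwoType σ
  hθ : ∀ p ∈ I, IsSilent σ (θ p) ∧ Sym2.mk (θ p).tp1 (θ p).tp2 = p

/-- Y-bounded frame: all star-type multiplicities are at most Y. -/
def Frame.Bounded (F : Frame σ) (Y : ℕ) : Prop :=
  ∀ s ∈ F.stars, ∀ μ : MsgType σ, s.v μ ≤ Y

/-- A chromatic frame: all its star-types are chromatic. -/
def Frame.Chromatic (F : Frame σ) : Prop := ∀ s ∈ F.stars, s.Chromatic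

/-- F describes S: the stars of F are exactly the realized star-types; I consists of the
non-noisy pairs of 1-types; and each θ-value is realized. -/
def Describes (F : Frame σ) (S : Struc σ A) : Prop :=
  (∀ st : StarType σ, st ∈ F.stars ↔ ∃ a : A, StarOf S a = st) ∧
  (∀ π π' : OneType σ, Sym2.mk π π' ∈ F.I ↔ ¬ NoisyPair S π π') ∧
  (∀ p ∈ F.I, ∃ a b : A, a ≠ b ∧ S.tp2 a b = F.θ p)

/-- The number M* of invertible message-types over σ. -/
def MstarCard (σ : CSig) : ℕ :=
  (Finset.univ.filter (fun μ : MsgType σ => IsInvertible σ μ.1)).card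

/-- p_{ik} = 1: the star-type sends no message to any element of 1-type π. -/
def PZero (s : StarType σ) (π : OneType σ) : Prop :=
  ∀ μ : MsgType σ, μ.1.tp2 = π → s.v μ = 0

instance (s : StarType σ) (π : OneType σ) : Decidable (PZero s π) := by
  unfold PZero; infer_instance

/-- r_{ik}: total multiplicity of non-invertible message-types with tp₂ = π. -/
def RCoeff (s : StarType σ) (π : OneType σ) : ℕ :=
  ∑ μ ∈ Finset.univ.filter (fun μ : MsgType σ => ¬ IsInvertible σ μ.1 ∧ μ.1.tp2 = π), s.v μ

/-- s_{ik}: total multiplicity of message-types with tp₂ = π. -/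
def SCoeff (s : StarType σ) (π : OneType σ) : ℕ :=
  ∑ μ ∈ Finset.univ.filter (fun μ : MsgType σ => μ.1.tp2 = π), s.v μ

/-- u_i = Σ_k o_{ik} w_k. -/
def Frame.uVal (F : Frame σ) (w : StarType σ → ℕ) (π : OneType σ) : ℕ :=
  ∑ s ∈ F.stars.filter (fun s => s.tp = π), w s

/-- v_j = Σ_k q_{jk} w_k. -/
def Frame.vVal (F : Frame σ) (w : StarType σ → ℕ) (μ : MsgType σ) : ℕ :=
  ∑ s ∈ F.stars, s.v μ * w s

/-- x_{ii'} = Σ_k o_{ik} p_{i'k} w_k. -/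
def Frame.xVal (F : Frame σ) (w : StarType σ → ℕ) (π π' : OneType σ) : ℕ :=
  ∑ s ∈ F.stars.filter (fun s => s.tp = π ∧ PZero s π'), w s

/-- w is a Z-solution of F (conditions C1–C6, over positive integers). -/
def IsZSolution (F : Frame σ) (Z : ℕ) (w : StarType σ → ℕ) : Prop :=
  (∀ s ∈ F.stars, 0 < w s) ∧
  (∀ μ μ' : MsgType σ, IsInvertible σ μ.1 → μ'.1 = μ.1.inv → F.vVal w μ = F.vVal w μ') ∧
  (∀ π : OneType σ, ∀ s ∈ F.stars, SCoeff s π ≤ F.uVal w π) ∧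
  (∀ π : OneType σ, F.uVal w π ≤ 1 ∨ Z < F.uVal w π) ∧
  (∀ π π' : OneType σ, ∀ s ∈ F.stars, s.tp = π →
     (1 < F.uVal w π ∨ RCoeff s π' ≤ F.xVal w π' π)) ∧
  (∀ π π' : OneType σ, Sym2.mk π π' ∉ F.I → F.uVal w π ≤ 1 ∨ F.uVal w π' ≤ 1) ∧
  (∀ π π' : OneType σ, ∀ s ∈ F.stars, Sym2.mk π π' ∉ F.I → s.tp = π →
     (1 < F.uVal w π ∨ F.xVal w π' π ≤ RCoeff s π'))

/-- u_i over ℕ* = ℕ ∪ {ℵ₀}. -/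
def Frame.uValE (F : Frame σ) (w : StarType σ → ℕ∞) (π : OneType σ) : ℕ∞ :=
  ∑ s ∈ F.stars.filter (fun s => s.tp = π), w s

/-- v_j over ℕ*. -/
def Frame.vValE (F : Frame σ) (w : StarType σ → ℕ∞) (μ : MsgType σ) : ℕ∞ :=
  ∑ s ∈ F.stars, (s.v μ : ℕ∞) * w s

/-- x_{ii'} over ℕ*. -/
def Frame.xValE (F : Frame σ) (w : StarType σ → ℕ∞) (π π' : OneType σ) : ℕ∞ :=
  ∑ s ∈ F.stars.filter (fun s => s.tp = π ∧ PZero s π'), w s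

/-- w is an extended Z-solution of F: a Z-solution over ℕ* = ℕ ∪ {ℵ₀}
(with nonzero components). -/
def IsExtZSolution (F : Frame σ) (Z : ℕ) (w : StarType σ → ℕ∞) : Prop :=
  (∀ s ∈ F.stars, w s ≠ 0) ∧
  (∀ μ μ' : MsgType σ, IsInvertible σ μ.1 → μ'.1 = μ.1.inv → F.vValE w μ = F.vValE w μ') ∧
  (∀ π : OneType σ, ∀ s ∈ F.stars, (SCoeff s π : ℕ∞) ≤ F.uValE w π) ∧
  (∀ π : OneType σ, F.uValE w π ≤ 1 ∨ (Z : ℕ∞) < F.uValE w π) ∧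
  (∀ π π' : OneType σ, ∀ s ∈ F.stars, s.tp = π →
     (1 < F.uValE w π ∨ (RCoeff s π' : ℕ∞) ≤ F.xValE w π' π)) ∧
  (∀ π π' : OneType σ, Sym2.mk π π' ∉ F.I → F.uValE w π ≤ 1 ∨ F.uValE w π' ≤ 1) ∧
  (∀ π π' : OneType σ, ∀ s ∈ F.stars, Sym2.mk π π' ∉ F.I → s.tp = π →
     (1 < F.uValE w π ∨ F.xValE w π' π ≤ (RCoeff s π' : ℕ∞)))

/-- The data of a normal-form sentence φ*: a quantifier-free equality-free α(x)
(given semantically by the set of 1-types entailing it), a quantifier-free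
equality-free β(x,y) (given by the set of 2-types entailing it), and positive
counts C_h for the counting predicates. -/
structure NormalForm (σ : CSig) where
  alpha : OneType σ → Prop
  beta : TwoType σ → Prop
  C : σ.B → ℕ
  hC : ∀ f ∈ σ.counting, 0 < C f

/-- S ⊨ φ*. -/
def SatNF (N : NormalForm σ) (S : Struc σ A) : Prop :=
  (∀ a : A, N.alpha (S.tp1 a)) ∧
  (∀ a b : A, a ≠ b → N.beta (S.tp2 a b)) ∧
  (∀ f ∈ σ.counting, ∀ a : A,
     {b : A | b ≠ a ∧ S.binary f a b = true}.encard = (N.C f : ℕ∞))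

/-- F ⊨ φ*. -/
def FrameSatNF (N : NormalForm σ) (F : Frame σ) : Prop :=
  (∀ s ∈ F.stars, N.alpha s.tp) ∧
  (∀ s ∈ F.stars, ∀ μ : MsgType σ, 0 < s.v μ → N.beta μ.1 ∧ N.beta μ.1.inv) ∧
  (∀ p ∈ F.I, N.beta (F.θ p) ∧ N.beta ((F.θ p).inv)) ∧
  (∀ s ∈ F.stars, ∀ f ∈ σ.counting,
     (∑ μ ∈ Finset.univ.filter (fun μ : MsgType σ => μ.1.rxy f = true), s.v μ) = N.C f)

/-- The signature obtained from σ by adding k new unary predicates; the counting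
predicates are unchanged. -/
def addUnary (σ : CSig) (k : ℕ) : CSig where
  U := σ.U ⊕ Fin k
  B := σ.B
  counting := σ.counting

/-- S' (interpreting σ with k extra unary predicates) is an expansion of S:
it agrees with S on all predicates of σ. -/
def IsExpansion {σ : CSig} {k : ℕ} {A : Type} (S' : Struc (addUnary σ k) A)
    (S : Struc σ A) : Prop :=
  (∀ (p : σ.U) (a : A), S'.unary (Sum.inl p) a = S.unary p a) ∧
  (∀ (f : σ.B) (a b : A), S'.binary f a b = S.binary f a b)
theorem OneType.ext' {σ : CSig} {t1 t2 : OneType σ} (hu : t1.u = t2.u)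
    (hd : t1.d = t2.d) : t1 = t2 := by
  cases t1; cases t2; cases hu; cases hd; rfl

/-- Lemma 4 (differentiated expansion): any structure can be expanded, using
⌈log₂ Z⌉ extra unary predicates, to a Z-differentiated structure; chromaticity
can be preserved. -/
theorem differentiated_expansion (σ : CSig) (Z : ℕ) (hZ : 0 < Z)
    (A : Type) [Countable A] (S : Struc σ A) :
    ∃ S' : Struc (addUnary σ (Nat.clog 2 Z)) A,
      IsExpansion S' S ∧ S'.Differentiated Z ∧ (S.Chromatic → S'.Chromatic) := by
  classical
  set k := Nat.clog 2 Z with hk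
  obtain ⟨e, he⟩ := Countable.exists_injective_nat A
  -- the class of an element
  set C : A → Set A := fun a => {b | S.tp1 b = S.tp1 a} with hC
  set D : A → Set A := fun a => {b | S.tp1 b = S.tp1 a ∧ e b < e a} with hD
  set lab : A → ℕ := fun a =>
    if (C a).encard ≤ ((2 ^ k : ℕ) : ℕ∞) then (D a).ncard else 0 with hlab
  have hZ2k : Z ≤ 2 ^ k := Nat.le_pow_clog one_lt_two Z
  have hCeq : ∀ a b : A, S.tp1 a = S.tp1 b → C a = C b := by
    intro a b h
    ext c; simp only [hC, Set.mem_setOf_eq, h]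
  -- lab is bounded
  have hlab_lt : ∀ a : A, lab a < 2 ^ k := by
    intro a
    simp only [hlab]
    split_ifs with h
    · have hfin : (C a).Finite := Set.finite_of_encard_le_coe h
      have hsub : D a ⊂ C a := by
        constructor
        · intro c hc; exact hc.1
        · intro hsub'
          have : a ∈ D a := hsub' (by simp [hC])
          exact absurd this.2 (lt_irrefl _)
      have h1 : (D a).ncard < (C a).ncard := Set.ncard_lt_ncard hsub hfin
      have h2 : (C a).ncard ≤ 2 ^ k := by
        rw [Set.encard_le_coe_iff_finite_ncard_le] at h
        exact h.2
      omega
    · exact Nat.pow_pos (by norm_num)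
  -- lab is injective on small classes
  have hlab_inj : ∀ a b : A, S.tp1 a = S.tp1 b →
      (C a).encard ≤ ((2 ^ k : ℕ) : ℕ∞) → lab a = lab b → a = b := by
    intro a b htp hsmall hl
    by_contra hne
    have hCab : C a = C b := hCeq a b htp
    have hsmallb : (C b).encard ≤ ((2 ^ k : ℕ) : ℕ∞) := hCab ▸ hsmall
    have hfin : (C a).Finite := Set.finite_of_encard_le_coe hsmall
    have hla : lab a = (D a).ncard := by simp only [hlab, if_pos hsmall]
    have hlb : lab b = (D b).ncard := by simp only [hlab, if_pos hsmallb]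
    have hene : e a ≠ e b := fun h => hne (he h)
    have key : ∀ x y : A, S.tp1 x = S.tp1 y → C y = C a → e x < e y →
        (D x).ncard < (D y).ncard := by
      intro x y hxy hCya hexy
      have hfinCy : (C y).Finite := by rw [hCya]; exact hfin
      have hfiny : (D y).Finite := hfinCy.subset (fun c hc => hc.1)
      apply Set.ncard_lt_ncard _ hfiny
      constructor
      · intro c hc; exact ⟨hc.1.trans hxy, hc.2.trans hexy⟩
      · intro hsub'
        have : x ∈ D x := hsub' ⟨hxy, hexy⟩
        exact absurd this.2 (lt_irrefl _)
    rcases lt_or_gt_of_ne hene with h | h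
    · exact absurd (hla ▸ hlb ▸ hl) (Nat.ne_of_lt (key a b htp hCab.symm h))
    · exact absurd (hlb ▸ hla ▸ hl.symm) (Nat.ne_of_lt (key b a htp.symm rfl h))
  -- lab is 0 on large classes
  have hlab_zero : ∀ a : A, ¬ (C a).encard ≤ ((2 ^ k : ℕ) : ℕ∞) → lab a = 0 := by
    intro a h; simp only [hlab, if_neg h]
  -- the expansion
  refine ⟨⟨fun p a => match p with
    | Sum.inl p => S.unary p a
    | Sum.inr i => Nat.testBit (lab a) i.1, S.binary⟩, ⟨fun _ _ => rfl, fun _ _ _ => rfl⟩,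
    ?_, ?_⟩
  all_goals set S' : Struc (addUnary σ k) A := ⟨fun p a => match p with
    | Sum.inl p => S.unary p a
    | Sum.inr i => Nat.testBit (lab a) i.1, S.binary⟩ with hS'
  -- relating extended 1-types to original 1-types and labels
  · -- Differentiated
    have htp1 : ∀ a b : A, S'.tp1 a = S'.tp1 b ↔ (S.tp1 a = S.tp1 b ∧ lab a = lab b) := by
      intro a b
      constructor
      · intro h
        have hu := congrArg OneType.u h
        have hd := congrArg OneType.d h
        constructor
        · have h1 : ∀ p : σ.U, S.unary p a = S.unary p b := fun p => congrFun hu (Sum.inl p)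
          have h2 : ∀ f : σ.B, S.binary f a a = S.binary f b b := fun f => congrFun hd f
          exact OneType.ext' (funext h1) (funext h2)
        · apply Nat.eq_of_testBit_eq
          intro i
          by_cases hik : i < k
          · exact congrFun hu (Sum.inr ⟨i, hik⟩)
          · rw [Nat.testBit_eq_false_of_lt, Nat.testBit_eq_false_of_lt]
            · exact lt_of_lt_of_le (hlab_lt b) (Nat.pow_le_pow_right (by norm_num) (le_of_not_gt hik))
            · exact lt_of_lt_of_le (hlab_lt a) (Nat.pow_le_pow_right (by norm_num) (le_of_not_gt hik))
      · rintro ⟨h1, h2⟩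
        have hu1 : (S.tp1 a).u = (S.tp1 b).u := congrArg OneType.u h1
        have hd1 : (S.tp1 a).d = (S.tp1 b).d := congrArg OneType.d h1
        refine OneType.ext' (funext fun p => ?_) (funext fun f => congrFun hd1 f)
        cases p with
        | inl p => exact congrFun hu1 p
        | inr i => show Nat.testBit (lab a) i.1 = Nat.testBit (lab b) i.1; rw [h2]
      -- end htp1
    intro π'
    by_cases hle : {a : A | S'.tp1 a = π'}.encard ≤ 1
    · exact Or.inl hle
    right
    rw [not_le] at hle
    obtain ⟨a, b, ha, hb, hab⟩ := Set.one_lt_encard_iff.1 hle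
    have hab' := (htp1 a b).1 (by rw [Set.mem_setOf_eq] at ha hb; rw [ha, hb])
    have hbig : ¬ (C a).encard ≤ ((2 ^ k : ℕ) : ℕ∞) := by
      intro hsmall
      exact hab (hlab_inj a b hab'.1 hsmall hab'.2)
    have hsub : C a ⊆ {c : A | S'.tp1 c = π'} := by
      intro c hc
      have hcb : ¬ (C c).encard ≤ ((2 ^ k : ℕ) : ℕ∞) := by
        rw [hCeq c a hc]; exact hbig
      have : S'.tp1 c = S'.tp1 a := (htp1 c a).2
        ⟨hc, by rw [hlab_zero c hcb, hlab_zero a hbig]⟩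
      rw [Set.mem_setOf_eq, this]; exact ha
    calc ((Z : ℕ∞)) ≤ ((2 ^ k : ℕ) : ℕ∞) := by exact_mod_cast hZ2k
      _ < (C a).encard := not_le.1 hbig
      _ ≤ _ := Set.encard_mono hsub
  · -- Chromatic
    intro hchr
    have htp2 : ∀ a b : A, IsInvertible (addUnary σ k) (S'.tp2 a b) ↔
        IsInvertible σ (S.tp2 a b) := fun a b => Iff.rfl
    have htp1' : ∀ a b : A, S.tp1 a ≠ S.tp1 b → S'.tp1 a ≠ S'.tp1 b := by
      intro a b h hc
      apply h
      have hu := congrArg OneType.u hc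
      have hd := congrArg OneType.d hc
      exact OneType.ext' (funext fun p => congrFun hu (Sum.inl p))
        (funext fun f => congrFun hd f)
    exact ⟨fun a a' hne hinv => htp1' a a' (hchr.1 a a' hne ((htp2 a a').1 hinv)),
      fun a a' a'' h1 h2 h3 hi1 hi2 =>
        htp1' a a'' (hchr.2 a a' a'' h1 h2 h3 ((htp2 a a').1 hi1) ((htp2 a' a'').1 hi2))⟩
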